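/- Let g be a Lie 2-algebra with toral rank MT(g) = r, standard maximal torus t of dimension r, and let {α_1, α_2, …, α_k} ⊆ Δ be linearly independent t-roots. If dim(g_{α_i}) ≠ dim(g_{α_1+α_i}) for all 2 ≤ i ≤ k, then g_{α_1}^{[2]} ⊆ I ⊕ n for some subspace I ⊆ t with dim(I) ≤ r − k. -/
import Mathlib


/-- A 2-map on a Lie algebra over the field `F` (char 2 version of a restricted structure):
`(c • x)^[2] = c^2 • x^[2]`, `ad (x^[2]) = (ad x) ∘ (ad x)` and
`(x+y)^[2] = x^[2] + y^[2] + [x,y]`. -/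
structure IsTwoMap (F : Type*) [Field F] {g : Type*} [LieRing g] [LieAlgebra F g]
    (p : g → g) : Prop where
  smul_pow : ∀ (c : F) (x : g), p (c • x) = (c ^ 2) • p x
  ad_pow : ∀ x y : g, ⁅p x, y⁆ = ⁅x, ⁅x, y⁆⁆
  add_pow : ∀ x y : g, p (x + y) = p x + p y + ⁅x, y⁆

/-- An element is 2-nilpotent if some iterate of the 2-map annihilates it. -/
def IsTwoNilpotent {g : Type*} [Zero g] (p : g → g) (x : g) : Prop :=
  ∃ k : ℕ, p^[k] x = 0

/-- A torus of a Lie 2-algebra: a Lie subalgebra closed under the 2-map on which the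
2-map is invertible (bijective). -/
def IsTorus (F : Type*) [Field F] {g : Type*} [LieRing g] [LieAlgebra F g]
    (p : g → g) (t : LieSubalgebra F g) : Prop :=
  (∀ x ∈ t, p x ∈ t) ∧ Set.BijOn p (t : Set g) (t : Set g)

/-- A maximal torus of a Lie 2-algebra. -/
def IsMaxTorus (F : Type*) [Field F] {g : Type*} [LieRing g] [LieAlgebra F g]
    (p : g → g) (t : LieSubalgebra F g) : Prop :=
  IsTorus F p t ∧ ∀ s : LieSubalgebra F g, IsTorus F p s → t ≤ s → s = t

/-- The weight (root) space of a linear functional `lam` on a torus `t`: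
`g_lam = {v | [x, v] = lam x • v for all x ∈ t}`. -/
def rootSpace {F : Type*} [Field F] {g : Type*} [LieRing g] [LieAlgebra F g]
    (t : LieSubalgebra F g) (lam : Module.Dual F t) : Submodule F g where
  carrier := {v | ∀ x : t, ⁅(x : g), v⁆ = lam x • v}
  add_mem' := by
    intro a b ha hb x
    rw [lie_add, ha x, hb x, smul_add]
  zero_mem' := by
    intro x
    rw [lie_zero, smul_zero]
  smul_mem' := by
    intro c v hv x
    rw [lie_smul, hv x, smul_comm]

/-- The set of `t`-roots: nonzero functionals with nonzero root space. -/
def rootSet {F : Type*} [Field F] {g : Type*} [LieRing g] [LieAlgebra F g]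
    (t : LieSubalgebra F g) : Set (Module.Dual F t) :=
  {lam | lam ≠ 0 ∧ rootSpace t lam ≠ ⊥}

/-- The subspace `N(σ, δ) = {x ∈ g_σ : [x, g_σ] ⊆ n and [[x, g_δ], g_{σ+δ}] ⊆ n}`,
given as `Nspace n g_σ g_δ g_{σ+δ}`. -/
def Nspace {F : Type*} [Field F] {g : Type*} [LieRing g] [LieAlgebra F g]
    (n gs gd gsd : Submodule F g) : Submodule F g where
  carrier := {x | x ∈ gs ∧ (∀ y ∈ gs, ⁅x, y⁆ ∈ n) ∧ ∀ z ∈ gd, ∀ w ∈ gsd, ⁅⁅x, z⁆, w⁆ ∈ n}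
  add_mem' := by
    intro a b ha hb
    obtain ⟨ha1, ha2, ha3⟩ := ha
    obtain ⟨hb1, hb2, hb3⟩ := hb
    refine ⟨gs.add_mem ha1 hb1, fun y hy => ?_, fun z hz w hw => ?_⟩
    · rw [add_lie]
      exact n.add_mem (ha2 y hy) (hb2 y hy)
    · rw [add_lie, add_lie]
      exact n.add_mem (ha3 z hz w hw) (hb3 z hz w hw)
  zero_mem' := by
    refine ⟨gs.zero_mem, fun y hy => ?_, fun z hz w hw => ?_⟩
    · rw [zero_lie]; exact n.zero_mem
    · rw [zero_lie, zero_lie]; exact n.zero_mem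
  smul_mem' := by
    intro c x hx
    obtain ⟨h1, h2, h3⟩ := hx
    refine ⟨gs.smul_mem c h1, fun y hy => ?_, fun z hz w hw => ?_⟩
    · rw [smul_lie]; exact n.smul_mem c (h2 y hy)
    · rw [smul_lie, smul_lie]; exact n.smul_mem c (h3 z hz w hw)

section Aux

variable {F : Type*} [Field F] {g : Type*} [LieRing g] [LieAlgebra F g]

lemma mem_rootSpace_iff (t : LieSubalgebra F g) (lam : Module.Dual F t) (v : g) :
    v ∈ rootSpace t lam ↔ ∀ x : t, ⁅(x : g), v⁆ = lam x • v := Iff.rfl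

lemma twoMap_zero (p : g → g) (hp : IsTwoMap F p) : p 0 = 0 := by
  have h := hp.add_pow 0 0
  simp only [add_zero, lie_zero, zero_lie] at h
  -- h : p 0 = p 0 + p 0 + 0  (after simp)
  have : p 0 = p 0 + p 0 := by simpa using h
  exact left_eq_add.mp this

lemma twoMap_iterate_bracket (p : g → g) (hp : IsTwoMap F p) (m : g) :
    ∀ (j : ℕ) (y : g), ⁅p^[j] m, y⁆ = ((LieAlgebra.ad F g m) ^ (2 ^ j)) y := by
  intro j
  induction j with
  | zero => intro y; simp [LieAlgebra.ad_apply]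
  | succ j ih =>
    intro y
    rw [Function.iterate_succ_apply', hp.ad_pow, ih, ih, ← Module.End.mul_apply, ← pow_add]
    congr 1
    rw [pow_succ, mul_two]

lemma eig_pow (D : g →ₗ[F] g) (c : F) (y : g) (h : D y = c • y) :
    ∀ N : ℕ, (D ^ N) y = c ^ N • y := by
  intro N
  induction N with
  | zero => simp
  | succ N ih =>
    rw [pow_succ, Module.End.mul_apply, h, map_smul, ih, smul_smul, ← pow_succ']

lemma eig_of_twoNilpotent (p : g → g) (hp : IsTwoMap F p) (m : g)
    (hm : IsTwoNilpotent p m) (c : F) (y : g) (hy : y ≠ 0) (hb : ⁅m, y⁆ = c • y) :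
    c = 0 := by
  obtain ⟨j, hj⟩ := hm
  have h2 : ((LieAlgebra.ad F g m) ^ (2 ^ j)) y = 0 := by
    rw [← twoMap_iterate_bracket p hp m j y, hj, zero_lie]
  have h3 := eig_pow (LieAlgebra.ad F g m) c y (by simpa [LieAlgebra.ad_apply] using hb) (2 ^ j)
  rw [h2] at h3
  rcases smul_eq_zero.mp h3.symm with h | h
  · exact pow_eq_zero_iff (Nat.pos_of_ne_zero (by positivity)).ne' |>.mp h
  · exact absurd h hy

end Aux

/-- if `α_1, …, α_k` are linearly independent roots with
`dim g_{α_i} ≠ dim g_{α_1+α_i}` for `i ≥ 2`, then `g_{α_1}^{[2]} ⊆ I ⊕ n` for some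
subspace `I ⊆ t` with `dim I ≤ r - k`. -/
theorem statement5
    {F : Type*} [Field F] [IsAlgClosed F] [CharP F 2]
    {g : Type*} [LieRing g] [LieAlgebra F g] [FiniteDimensional F g]
    (p : g → g) (hp : IsTwoMap F p)
    (t : LieSubalgebra F g) (hmax : IsMaxTorus F p t)
    (n : Submodule F g)
    (hn : ∀ x : g, x ∈ n ↔ x ∈ rootSpace t 0 ∧ IsTwoNilpotent p x)
    (hstd : ∀ x ∈ rootSpace t 0, ∀ y ∈ n, ⁅x, y⁆ ∈ n)
    (hdecomp : rootSpace t 0 = t.toSubmodule ⊔ n)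
    (hdisj : Disjoint t.toSubmodule n)
    (r : ℕ) (hdimt : Module.finrank F t = r)
    (hrank : ∀ s : LieSubalgebra F g, IsTorus F p s → Module.finrank F s ≤ r)
    (k : ℕ) [NeZero k] (a : Fin k → Module.Dual F t)
    (hindep : LinearIndependent F a) (hroots : ∀ i, a i ∈ rootSet t)
    (hdims : ∀ i : Fin k, i ≠ 0 →
      Module.finrank F (rootSpace t (a i)) ≠ Module.finrank F (rootSpace t (a 0 + a i))) :
    ∃ I : Submodule F g, I ≤ t.toSubmodule ∧ Module.finrank F I ≤ r - k ∧
      ∀ x ∈ rootSpace t (a 0), p x ∈ I ⊔ n := by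
  classical
  haveI : FiniteDimensional F t := inferInstance
  have hKrank : Module.finrank F
      (Submodule.dualCoannihilator (Submodule.span F (Set.range a))) = r - k := by
    have h1 : Module.finrank F (Submodule.span F (Set.range a)) = k := by
      rw [finrank_span_eq_card hindep, Fintype.card_fin]
    have h2 := Subspace.finrank_add_finrank_dualCoannihilator_eq (Submodule.span F (Set.range a))
    omega
  refine ⟨(Submodule.dualCoannihilator (Submodule.span F (Set.range a))).map
      t.toSubmodule.subtype, Submodule.map_subtype_le _ _, ?_, ?_⟩
  · rw [Submodule.finrank_map_subtype_eq]
    exact le_of_eq hKrank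
  intro x hx
  have hx' : ∀ u : t, ⁅(u : g), x⁆ = a 0 u • x := (mem_rootSpace_iff t (a 0) x).mp hx
  by_cases hx0 : x = 0
  · rw [hx0, twoMap_zero p hp]
    exact Submodule.zero_mem _
  -- p x lies in the zero root space
  have hpx0 : p x ∈ rootSpace t 0 := by
    refine (mem_rootSpace_iff t 0 (p x)).mpr fun u => ?_
    have h2 : ⁅x, (u : g)⁆ = -(a 0 u • x) := by
      rw [← hx' u]; exact (lie_skew _ _).symm
    have h3 : ⁅p x, (u : g)⁆ = 0 := by
      rw [hp.ad_pow, h2, lie_neg, lie_smul, lie_self, smul_zero, neg_zero]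
    have h4 : ⁅(u : g), p x⁆ = 0 := by rw [← lie_skew, h3, neg_zero]
    rw [h4]; simp
  rw [hdecomp] at hpx0
  obtain ⟨s, hs, m, hm, hsm⟩ := Submodule.mem_sup.mp hpx0
  set st : t := ⟨s, hs⟩ with hst
  -- bracket identity  ⁅x, ⁅x, y⁆⁆ = ⁅s, y⁆ + ⁅m, y⁆
  have key : ∀ y : g, ⁅x, ⁅x, y⁆⁆ = ⁅s, y⁆ + ⁅m, y⁆ := by
    intro y
    rw [← hp.ad_pow, ← hsm, add_lie]
  have hmn : IsTwoNilpotent p m := ((hn m).mp hm).2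
  -- the first root kills s
  have h00 : a 0 st = 0 := by
    have h2 := key x
    rw [lie_self, lie_zero] at h2
    have h1 : ⁅s, x⁆ = a 0 st • x := hx' st
    have h3 : ⁅m, x⁆ = (-(a 0 st)) • x := by
      rw [neg_smul, ← h1]
      exact eq_neg_of_add_eq_zero_right h2.symm
    have := eig_of_twoNilpotent p hp m hmn _ x hx0 h3
    simpa using this
  -- every root kills s
  have hall : ∀ i, a i st = 0 := by
    intro i
    by_cases hi0 : i = 0
    · rw [hi0]; exact h00
    by_contra hc
    set c : F := a i st with hcdef
    -- injectivity of ad x on root spaces where s acts by c ≠ 0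
    have inj : ∀ (μ : Module.Dual F t), μ st = c → ∀ y ∈ rootSpace t μ,
        ⁅x, y⁆ = 0 → y = 0 := by
      intro μ hμ y hy hxy
      have hy' := (mem_rootSpace_iff t μ y).mp hy
      by_contra hy0
      have h2 := key y
      rw [hxy, lie_zero] at h2
      have h1 : ⁅s, y⁆ = c • y := by rw [← hμ]; exact hy' st
      have h3 : ⁅m, y⁆ = (-c) • y := by
        rw [neg_smul, ← h1]
        exact eq_neg_of_add_eq_zero_right h2.symm
      have := eig_of_twoNilpotent p hp m hmn _ y hy0 h3
      exact hc (by simpa using this)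
    -- ad x maps the μ root space into the (a 0 + μ) root space
    have admap : ∀ (μ : Module.Dual F t) (y : g), y ∈ rootSpace t μ →
        ⁅x, y⁆ ∈ rootSpace t (a 0 + μ) := by
      intro μ y hy
      have hy' := (mem_rootSpace_iff t μ y).mp hy
      refine (mem_rootSpace_iff t (a 0 + μ) _).mpr fun u => ?_
      rw [leibniz_lie, hx' u, hy' u, lie_smul, smul_lie, LinearMap.add_apply, add_smul]
    have hchar : a 0 + (a 0 + a i) = a i := by
      ext u
      have h2 : (2 : F) = 0 := by exact_mod_cast CharP.cast_eq_zero F 2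
      have h3 : a 0 u + a 0 u = 0 := by rw [← two_mul, h2, zero_mul]
      simp only [LinearMap.add_apply, ← add_assoc, h3, zero_add]
    have map1 : ∀ y ∈ rootSpace t (a i), (LieAlgebra.ad F g x) y ∈ rootSpace t (a 0 + a i) := by
      intro y hy
      rw [LieAlgebra.ad_apply]
      exact admap _ y hy
    have map2 : ∀ y ∈ rootSpace t (a 0 + a i), (LieAlgebra.ad F g x) y ∈ rootSpace t (a i) := by
      intro y hy
      rw [LieAlgebra.ad_apply]
      have h4 := admap _ y hy
      rwa [hchar] at h4
    have hμW : (a 0 + a i) st = c := by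
      rw [LinearMap.add_apply, h00, zero_add]
    have inj1 : Function.Injective ((LieAlgebra.ad F g x).restrict map1) := by
      rw [injective_iff_map_eq_zero]
      intro y hy
      have hco : ⁅x, (y : g)⁆ = 0 := by
        simpa [LinearMap.restrict_apply, LieAlgebra.ad_apply] using congrArg Subtype.val hy
      exact Subtype.ext (inj (a i) rfl y y.2 hco)
    have inj2 : Function.Injective ((LieAlgebra.ad F g x).restrict map2) := by
      rw [injective_iff_map_eq_zero]
      intro y hy
      have hco : ⁅x, (y : g)⁆ = 0 := by
        simpa [LinearMap.restrict_apply, LieAlgebra.ad_apply] using congrArg Subtype.val hy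
      exact Subtype.ext (inj (a 0 + a i) hμW y y.2 hco)
    have le1 := LinearMap.finrank_le_finrank_of_injective inj1
    have le2 := LinearMap.finrank_le_finrank_of_injective inj2
    exact hdims i hi0 (le_antisymm le1 le2)
  -- conclude: s ∈ K, so p x = s + m ∈ I ⊔ n
  have hsK : st ∈ Submodule.dualCoannihilator (Submodule.span F (Set.range a)) := by
    rw [Submodule.mem_dualCoannihilator]
    intro φ hφ
    induction hφ using Submodule.span_induction with
    | mem φ hφ => obtain ⟨i, rfl⟩ := hφ; exact hall i
    | zero => simp
    | add φ ψ _ _ h1 h2 => simp [h1, h2]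
    | smul cφ φ _ h1 => simp [h1]
  rw [← hsm]
  exact Submodule.add_mem_sup ⟨st, hsK, rfl⟩ hm
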